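/- Let b be an L(J,K)-valued Schur multiplier on 𝔹^d with b(0) = 0, and suppose X, Y are two extremal contractive Gleason solutions for H(b) that are unitarily equivalent via a unitary W on H(b) with W X (W* ⊗ I_d) = Y. Then W k_z^b = k_z^b R for a fixed unitary R ∈ L(K) and all z ∈ 𝔹^d; i.e., W is a constant unitary multiplier. -/

import Mathlib

open ContinuousLinearMap

set_option synthInstance.maxHeartbeats 1000000
set_option maxHeartbeats 1000000

noncomputable section

instance piLpComplete {d : ℕ} {H : Type*} [NormedAddCommGroup H]
    [InnerProductSpace ℂ H] [CompleteSpace H] :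
    CompleteSpace (PiLp 2 fun _ : Fin d => H) :=
  inferInstance

/-- The row operator `z : H^d → H`, `(h₁,...,h_d) ↦ Σ zⱼ hⱼ`, for a scalar row `z ∈ ℂ^d`. -/
def rowOp {d : ℕ} {H : Type*} [NormedAddCommGroup H] [InnerProductSpace ℂ H]
    (z : EuclideanSpace ℂ (Fin d)) : PiLp 2 (fun _ : Fin d => H) →L[ℂ] H :=
  ∑ j, z j • ((ContinuousLinearMap.proj j : (∀ _ : Fin d, H) →L[ℂ] H).comp
    (PiLp.continuousLinearEquiv 2 ℂ (fun _ : Fin d => H)).toContinuousLinearMap)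

/-- The column operator `z* : H → H^d`, `h ↦ (z̄₁ h, ..., z̄_d h)`; the adjoint of `rowOp z`. -/
def colOp {d : ℕ} {H : Type*} [NormedAddCommGroup H] [InnerProductSpace ℂ H]
    (z : EuclideanSpace ℂ (Fin d)) : H →L[ℂ] PiLp 2 (fun _ : Fin d => H) :=
  ((PiLp.continuousLinearEquiv 2 ℂ (fun _ : Fin d => H)).symm.toContinuousLinearMap).comp
    (ContinuousLinearMap.pi fun j => (starRingEnd ℂ (z j)) • ContinuousLinearMap.id ℂ H)

/-- Ampliation `A ⊗ I_d` of an operator `A : H → J` acting componentwise on columns. -/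
def liftD {d : ℕ} {H J : Type*} [NormedAddCommGroup H] [InnerProductSpace ℂ H]
    [NormedAddCommGroup J] [InnerProductSpace ℂ J] (A : H →L[ℂ] J) :
    PiLp 2 (fun _ : Fin d => H) →L[ℂ] PiLp 2 (fun _ : Fin d => J) :=
  ((PiLp.continuousLinearEquiv 2 ℂ (fun _ : Fin d => J)).symm.toContinuousLinearMap).comp <|
    (ContinuousLinearMap.pi fun j =>
      A.comp ((ContinuousLinearMap.proj j : (∀ _ : Fin d, H) →L[ℂ] H))).comp
    (PiLp.continuousLinearEquiv 2 ℂ (fun _ : Fin d => H)).toContinuousLinearMap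

open scoped InnerProductSpace

section Aux

variable {d : ℕ} {H J : Type*} [NormedAddCommGroup H] [InnerProductSpace ℂ H]
    [NormedAddCommGroup J] [InnerProductSpace ℂ J]

lemma liftD_apply (A : H →L[ℂ] J) (x : PiLp 2 (fun _ : Fin d => H)) (j : Fin d) :
    liftD A x j = A (x j) := rfl

lemma colOp_apply (z : EuclideanSpace ℂ (Fin d)) (h : H) (j : Fin d) :
    colOp z h j = starRingEnd ℂ (z j) • h := rfl

lemma liftD_comp_colOp (A : H →L[ℂ] H) (z : EuclideanSpace ℂ (Fin d)) :
    liftD A ∘L colOp z = colOp z ∘L A := by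
  ext h j
  exact map_smul A _ h

lemma liftD_comp (A B : H →L[ℂ] H) : liftD (d := d) (A ∘L B) = liftD A ∘L liftD B := by
  ext h j; rfl

lemma liftD_one : liftD (d := d) (1 : H →L[ℂ] H) = 1 := by
  ext h j; rfl

lemma adjoint_liftD [CompleteSpace H] [CompleteSpace J] (A : H →L[ℂ] J) :
    adjoint (liftD (d := d) A) = liftD (adjoint A) := by
  symm
  rw [eq_adjoint_iff]
  intro x y
  simp only [PiLp.inner_apply, liftD_apply, adjoint_inner_left]

lemma norm_colOp_apply (z : EuclideanSpace ℂ (Fin d)) (h : H) :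
    ‖colOp z h‖ = ‖z‖ * ‖h‖ := by
  have h1 : ‖colOp z h‖ ^ 2 = (‖z‖ * ‖h‖) ^ 2 := by
    rw [PiLp.norm_sq_eq_of_L2]
    rw [EuclideanSpace.norm_eq]
    rw [mul_pow, Real.sq_sqrt (by positivity)]
    rw [Finset.sum_mul]
    congr 1
    funext j
    rw [colOp_apply, norm_smul, mul_pow]
    simp
  have h2 : (0:ℝ) ≤ ‖colOp z h‖ := norm_nonneg _
  have h3 : (0:ℝ) ≤ ‖z‖ * ‖h‖ := by positivity
  nlinarith

end Aux

/-- Let `b` be a Schur multiplier with `b(0) = 0` and `X, Y` extremal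
contractive Gleason solutions for `H(b)` that are unitarily equivalent via a unitary `W` on
`H(b)` (`W X (W* ⊗ I_d) = Y`).  Then `W` is a constant unitary multiplier: there is a unitary
`R ∈ L(K)` with `W k_z^b = k_z^b R` for all `z ∈ 𝔹^d`. -/
theorem stmt_17 {d : ℕ} {J K Hb : Type*}
    [NormedAddCommGroup J] [InnerProductSpace ℂ J] [CompleteSpace J]
    [NormedAddCommGroup K] [InnerProductSpace ℂ K] [CompleteSpace K]
    [NormedAddCommGroup Hb] [InnerProductSpace ℂ Hb] [CompleteSpace Hb]
    (b : EuclideanSpace ℂ (Fin d) → (J →L[ℂ] K)) (hb0 : b 0 = 0)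
    (kb : EuclideanSpace ℂ (Fin d) → (K →L[ℂ] Hb))
    (hker : ∀ z w : EuclideanSpace ℂ (Fin d), ‖z‖ < 1 → ‖w‖ < 1 →
      (adjoint (kb z)) ∘L kb w
        = (1 - ⟪w, z⟫_ℂ)⁻¹ • ((1 : K →L[ℂ] K) - (b z) ∘L adjoint (b w)))
    (hspan : (⨆ z : {z : EuclideanSpace ℂ (Fin d) // ‖z‖ < 1},
        LinearMap.range (kb z.1 : K →ₗ[ℂ] Hb)).topologicalClosure = ⊤)
    (X Y : PiLp 2 (fun _ : Fin d => Hb) →L[ℂ] Hb) (hX : ‖X‖ ≤ 1) (hY : ‖Y‖ ≤ 1)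
    (hGleasonX : ∀ z : EuclideanSpace ℂ (Fin d), ‖z‖ < 1 →
      (Ring.inverse (1 - X ∘L colOp z) : Hb →L[ℂ] Hb) ∘L kb 0 = kb z)
    (hGleasonY : ∀ z : EuclideanSpace ℂ (Fin d), ‖z‖ < 1 →
      (Ring.inverse (1 - Y ∘L colOp z) : Hb →L[ℂ] Hb) ∘L kb 0 = kb z)
    (hextX : X ∘L adjoint X = 1 - (kb 0) ∘L adjoint (kb 0))
    (hextY : Y ∘L adjoint Y = 1 - (kb 0) ∘L adjoint (kb 0))
    (W : Hb →L[ℂ] Hb) (hWu : (adjoint W) ∘L W = 1) (hWu' : W ∘L (adjoint W) = 1)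
    (hequiv : W ∘L X ∘L liftD (adjoint W) = Y) :
    ∃ R : K →L[ℂ] K, (adjoint R) ∘L R = 1 ∧ R ∘L (adjoint R) = 1 ∧
      ∀ z : EuclideanSpace ℂ (Fin d), ‖z‖ < 1 → W ∘L kb z = kb z ∘L R := by
  -- `kb 0` is an isometry
  have hk0 : adjoint (kb 0) ∘L kb 0 = 1 := by
    have h := hker 0 0 (by simp) (by simp)
    simpa [hb0] using h
  have hk0pt : ∀ v, adjoint (kb 0) (kb 0 v) = v := fun v => by
    simpa using ContinuousLinearMap.ext_iff.mp hk0 v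
  have hW1pt : ∀ v, adjoint W (W v) = v := fun v => by
    simpa using ContinuousLinearMap.ext_iff.mp hWu v
  have hW2pt : ∀ v, W (adjoint W v) = v := fun v => by
    simpa using ContinuousLinearMap.ext_iff.mp hWu' v
  have hLpt : ∀ v, liftD (adjoint W) (liftD W v) = v := fun v => by
    have h : liftD (d := d) (adjoint W) ∘L liftD W = 1 := by
      rw [← liftD_comp, hWu, liftD_one]
    simpa using ContinuousLinearMap.ext_iff.mp h v
  have hYYpt : ∀ u, Y (adjoint Y u) = W (X (adjoint X (adjoint W u))) := fun u => by
    conv_lhs => rw [← hequiv]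
    simp only [adjoint_comp, adjoint_liftD, adjoint_adjoint, comp_apply, hLpt]
  -- W (kb 0)(kb 0)* W* = (kb 0)(kb 0)*
  have hPpt : ∀ u, W (kb 0 (adjoint (kb 0) (adjoint W u))) = kb 0 (adjoint (kb 0) u) := by
    intro u
    have h1 := ContinuousLinearMap.ext_iff.mp hextX (adjoint W u)
    have h2 := ContinuousLinearMap.ext_iff.mp hextY u
    simp only [comp_apply, sub_apply, ContinuousLinearMap.one_apply] at h1 h2
    have h3 := hYYpt u
    rw [h2, h1, map_sub, hW2pt u] at h3
    exact (sub_right_inj.mp h3).symm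
  set R : K →L[ℂ] K := adjoint (kb 0) ∘L (W ∘L kb 0) with hR
  have hWk0pt : ∀ v, W (kb 0 v) = kb 0 (R v) := fun v => by
    simp only [hR, comp_apply]
    rw [← hPpt (W (kb 0 v)), hW1pt (kb 0 v), hk0pt v]
  have hRadjpt : ∀ v, adjoint R v = adjoint (kb 0) (adjoint W (kb 0 v)) := fun v => by
    rw [hR]
    simp [adjoint_comp, adjoint_adjoint]
  have hR1pt : ∀ v, adjoint R (R v) = v := fun v => by
    simp only [hRadjpt]; simp only [hR, comp_apply]
    rw [← hPpt (W (kb 0 v))]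
    simp only [hW1pt, hk0pt]
  have hR2pt : ∀ v, R (adjoint R v) = v := fun v => by
    simp only [hRadjpt]; simp only [hR, comp_apply]
    rw [hPpt (kb 0 v)]
    simp only [hk0pt]
  have hW'k0pt : ∀ v, adjoint W (kb 0 v) = kb 0 (adjoint R v) := fun v => by
    conv_lhs => rw [← hR2pt v, ← hWk0pt (adjoint R v)]
    exact hW1pt _
  refine ⟨R, ?_, ?_, ?_⟩
  · ext v; simpa using hR1pt v
  · ext v; simpa using hR2pt v
  · intro z hz
    have hcolnorm : ‖colOp (H := Hb) z‖ ≤ ‖z‖ :=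
      ContinuousLinearMap.opNorm_le_bound _ (norm_nonneg z)
        (fun h => (norm_colOp_apply z h).le)
    have hXz : ‖X ∘L colOp z‖ < 1 := by
      calc ‖X ∘L colOp z‖ ≤ ‖X‖ * ‖colOp (H := Hb) z‖ := opNorm_comp_le _ _
        _ ≤ 1 * ‖z‖ := mul_le_mul hX hcolnorm (ContinuousLinearMap.opNorm_nonneg _) zero_le_one
        _ = ‖z‖ := one_mul _
        _ < 1 := hz
    set u : (Hb →L[ℂ] Hb)ˣ := Units.oneSub (X ∘L colOp z) hXz with hu
    have huval : (↑u : Hb →L[ℂ] Hb) = 1 - X ∘L colOp z := rfl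
    have hXinv : Ring.inverse ((1 : Hb →L[ℂ] Hb) - X ∘L colOp z) = ↑u⁻¹ := by
      rw [← huval, Ring.inverse_unit]
    have huu1 : ∀ v, (↑u : Hb →L[ℂ] Hb) ((↑u⁻¹ : Hb →L[ℂ] Hb) v) = v := fun v => by
      have h := ContinuousLinearMap.ext_iff.mp u.mul_inv v
      simp only [ContinuousLinearMap.mul_apply, ContinuousLinearMap.one_apply] at h
      exact h
    have huu2 : ∀ v, (↑u⁻¹ : Hb →L[ℂ] Hb) ((↑u : Hb →L[ℂ] Hb) v) = v := fun v => by
      have h := ContinuousLinearMap.ext_iff.mp u.inv_mul v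
      simp only [ContinuousLinearMap.mul_apply, ContinuousLinearMap.one_apply] at h
      exact h
    have hWuW : ∀ (a c : Hb →L[ℂ] Hb), (∀ v, a (c v) = v) →
        (W ∘L (a ∘L adjoint W)) * (W ∘L (c ∘L adjoint W)) = 1 := fun a c hac => by
      rw [ContinuousLinearMap.mul_def]
      ext v
      simp only [comp_apply, ContinuousLinearMap.one_apply, hW1pt, hac, hW2pt]
    have hLCpt : ∀ v, liftD (adjoint W) (colOp z v) = colOp z (adjoint W v) := fun v => by
      simpa using ContinuousLinearMap.ext_iff.mp (liftD_comp_colOp (adjoint W) z) v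
    have hconj : (1 : Hb →L[ℂ] Hb) - Y ∘L colOp z
        = W ∘L ((1 - X ∘L colOp z) ∘L adjoint W) := by
      conv_lhs => rw [← hequiv]
      ext v
      simp only [comp_apply, sub_apply, ContinuousLinearMap.one_apply, map_sub, hLCpt, hW2pt]
    set w : (Hb →L[ℂ] Hb)ˣ :=
      ⟨W ∘L ((↑u) ∘L adjoint W), W ∘L ((↑u⁻¹) ∘L adjoint W),
        hWuW _ _ huu1, hWuW _ _ huu2⟩ with hw
    have hwval : ((1 : Hb →L[ℂ] Hb) - Y ∘L colOp z) = ↑w := by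
      show _ = W ∘L ((↑u) ∘L adjoint W)
      rw [huval]
      exact hconj
    have hinvY : Ring.inverse ((1 : Hb →L[ℂ] Hb) - Y ∘L colOp z)
        = W ∘L ((↑u⁻¹ : Hb →L[ℂ] Hb) ∘L adjoint W) := by
      rw [hwval, Ring.inverse_unit]
      rfl
    have h1 := hGleasonY z hz
    rw [hinvY] at h1
    have h2 := hGleasonX z hz
    rw [hXinv] at h2
    have h1pt : ∀ v, W ((↑u⁻¹ : Hb →L[ℂ] Hb) (adjoint W (kb 0 v))) = kb z v := fun v => by
      simpa using ContinuousLinearMap.ext_iff.mp h1 v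
    have h2pt : ∀ v, (↑u⁻¹ : Hb →L[ℂ] Hb) (kb 0 v) = kb z v := fun v => by
      simpa using ContinuousLinearMap.ext_iff.mp h2 v
    have hkz : ∀ v, kb z v = W (kb z (adjoint R v)) := fun v => by
      rw [← h1pt v, hW'k0pt v, h2pt (adjoint R v)]
    ext v
    simp only [comp_apply]
    rw [hkz (R v), hR1pt v]

end
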